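/- Fix integers N ≥ 2 and c ≥ 1. Let P be the polynomial ring over ℚ in the variables t_{k,α}, indexed by positive ODD integers k not divisible by N and components α ∈ {1,…,c}. For each positive EVEN integer a divisible by N, define the linear operator W_a on P by W_a = Σ_{α=1}^{c} ( (1/2) Σ_{j ≥ 1 odd, N∤j} (j+a) t_{j+a,α} ∂/∂t_{j,α} + (1/4) Σ_{i+j=a, i,j ≥ 1 odd, N∤i} i·j·t_{i,α} t_{j,α} ), where the quadratic sum acts by multiplication (note i odd and a even force j odd, and N∤i with N | a forces N∤j). Then for all positive even integers a, b divisible by N: W_a ∘ W_b − W_b ∘ W_a = ((b − a)/2) · W_{a+b} as linear endomorphisms of P. -/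

import Mathlib

open MvPolynomial

/-- Indices of the time variables of the B type mcGD hierarchy: positive odd
integers not divisible by `N`. -/
abbrev BGDTimeIndex (N : ℕ) : Type := {k : ℕ // 0 < k ∧ Odd k ∧ ¬ N ∣ k}

/-- Variables `t_{k,α}` of the polynomial ring: an odd time index together with
a component `α ∈ {1, …, c}`. -/
abbrev BGDVar (N c : ℕ) : Type := BGDTimeIndex N × Fin c

/-- The Virasoro operator
`W_a = Σ_α ( (1/2) Σ_{j ≥ 1 odd, N∤j} (j+a) t_{j+a,α} ∂/∂t_{j,α}
        + (1/4) Σ_{i+j=a, i,j ≥ 1 odd, N∤i} i j t_{i,α} t_{j,α} )`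
acting on polynomials in the variables `t_{k,α}` (`k ≥ 1` odd, `N ∤ k`),
for `a` a positive even multiple of `N`. -/
noncomputable def virasoroOpBGD (N c : ℕ) (a : ℕ) (hae : Even a) (ha : N ∣ a)
    (p : MvPolynomial (BGDVar N c) ℚ) : MvPolynomial (BGDVar N c) ℚ :=
  ((1 / 2 : ℚ) • ∑ᶠ (j : BGDTimeIndex N) (α : Fin c),
      ((j.1 + a : ℕ) : ℚ) •
        (X ((⟨j.1 + a,
              Nat.lt_of_lt_of_le j.2.1 (Nat.le_add_right _ _),
              j.2.2.1.add_even hae,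
              fun hd => j.2.2.2 (by simpa using Nat.dvd_sub hd ha)⟩ : BGDTimeIndex N), α)
          * pderiv ((j, α) : BGDVar N c) p))
  + ((1 / 4 : ℚ) • ∑ᶠ (i : BGDTimeIndex N) (j : BGDTimeIndex N) (α : Fin c),
      if i.1 + j.1 = a then
        ((i.1 : ℚ) * (j.1 : ℚ)) • (X ((i, α) : BGDVar N c) * X ((j, α) : BGDVar N c))
      else 0) * p

namespace VirB

variable {N c : ℕ}

/-- Shift of a time index by an even multiple of `N`. -/
def shI (a : ℕ) (hae : Even a) (ha : N ∣ a) (j : BGDTimeIndex N) : BGDTimeIndex N :=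
  ⟨j.1 + a, Nat.lt_of_lt_of_le j.2.1 (Nat.le_add_right _ _), j.2.2.1.add_even hae,
    fun hd => j.2.2.2 (by simpa using Nat.dvd_sub hd ha)⟩

noncomputable def D (a : ℕ) (hae : Even a) (ha : N ∣ a)
    (p : MvPolynomial (BGDVar N c) ℚ) : MvPolynomial (BGDVar N c) ℚ :=
  ∑ᶠ (j : BGDTimeIndex N) (α : Fin c),
    ((j.1 + a : ℕ) : ℚ) •
      (X ((shI a hae ha j, α) : BGDVar N c) * pderiv ((j, α) : BGDVar N c) p)

noncomputable def Qp (N c : ℕ) (a : ℕ) : MvPolynomial (BGDVar N c) ℚ :=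
  ∑ᶠ (i : BGDTimeIndex N) (j : BGDTimeIndex N) (α : Fin c),
    if i.1 + j.1 = a then
      ((i.1 : ℚ) * (j.1 : ℚ)) • (X ((i, α) : BGDVar N c) * X ((j, α) : BGDVar N c))
    else 0

lemma W_eq (a : ℕ) (hae : Even a) (ha : N ∣ a) (p : MvPolynomial (BGDVar N c) ℚ) :
    virasoroOpBGD N c a hae ha p
      = (1/2 : ℚ) • D a hae ha p + ((1/4 : ℚ) • Qp N c a) * p := rfl

/-- commutation of partial derivatives -/
lemma pderiv_comm' (i j : BGDVar N c) (p : MvPolynomial (BGDVar N c) ℚ) :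
    pderiv i (pderiv j p) = pderiv j (pderiv i p) := by
  induction p using MvPolynomial.induction_on' with
  | add p q hp hq => simp [hp, hq]
  | monomial s a =>
    rcases eq_or_ne i j with rfl | hij
    · rfl
    · simp only [pderiv_monomial]
      rw [Finsupp.tsub_apply, Finsupp.tsub_apply, Finsupp.single_apply, Finsupp.single_apply,
        if_neg hij, if_neg (Ne.symm hij)]
      have hE : (s - Finsupp.single j 1) - Finsupp.single i 1
          = (s - Finsupp.single i 1) - Finsupp.single j 1 := by
        ext k
        rw [Finsupp.tsub_apply, Finsupp.tsub_apply, Finsupp.tsub_apply, Finsupp.tsub_apply]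
        omega
      rw [hE]
      congr 1
      simp only [Nat.sub_zero]
      ring


noncomputable def Dsum (a : ℕ) (hae : Even a) (ha : N ∣ a) (S : Finset (BGDVar N c))
    (p : MvPolynomial (BGDVar N c) ℚ) : MvPolynomial (BGDVar N c) ℚ :=
  ∑ v ∈ S, ((v.1.1 + a : ℕ) : ℚ) •
    (X ((shI a hae ha v.1, v.2) : BGDVar N c) * pderiv v p)

lemma D_eq_Dsum (a : ℕ) (hae : Even a) (ha : N ∣ a) (p : MvPolynomial (BGDVar N c) ℚ)
    (S : Finset (BGDVar N c)) (hS : ∀ v ∉ S, pderiv v p = 0) :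
    D a hae ha p = Dsum a hae ha S p := by
  have hsub : S ⊆ (S.image Prod.fst) ×ˢ Finset.univ := by
    intro v hv
    rw [Finset.mem_product]
    exact ⟨Finset.mem_image.2 ⟨v, hv, rfl⟩, Finset.mem_univ _⟩
  have h1 : D a hae ha p = Dsum a hae ha ((S.image Prod.fst) ×ˢ Finset.univ) p := by
    unfold D Dsum
    simp only [finsum_eq_sum_of_fintype]
    rw [finsum_eq_finset_sum_of_support_subset _ (s := S.image Prod.fst) ?hsupp]
    · rw [Finset.sum_product]
    · intro j hj
      simp only [Function.mem_support, ne_eq] at hj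
      by_contra hjm
      apply hj
      apply Finset.sum_eq_zero
      intro α _
      rw [hS (j, α) (fun hmem => hjm (hsub hmem |> Finset.mem_product.1 |>.1))]
      simp
  rw [h1]
  exact (Finset.sum_subset hsub (by
    intro v _ hv
    rw [hS v hv]
    simp)).symm

lemma Dsum_congr (a : ℕ) (hae : Even a) (ha : N ∣ a) (p : MvPolynomial (BGDVar N c) ℚ)
    (S S' : Finset (BGDVar N c)) (hS : ∀ v ∉ S, pderiv v p = 0)
    (hS' : ∀ v ∉ S', pderiv v p = 0) :
    Dsum a hae ha S p = Dsum a hae ha S' p := by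
  rw [← D_eq_Dsum a hae ha p S hS, D_eq_Dsum a hae ha p S' hS']

lemma pderiv_vars {p : MvPolynomial (BGDVar N c) ℚ} :
    ∀ v ∉ p.vars, pderiv v p = 0 := fun _ hv => pderiv_eq_zero_of_notMem_vars hv

lemma pderiv_D_zero (a : ℕ) (hae : Even a) (ha : N ∣ a) (p : MvPolynomial (BGDVar N c) ℚ)
    (S : Finset (BGDVar N c)) (hS : ∀ v ∉ S, pderiv v p = 0) (k : BGDVar N c)
    (hk : k ∉ S ∪ S.image (fun v => ((shI a hae ha v.1, v.2) : BGDVar N c))) :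
    pderiv k (D a hae ha p) = 0 := by
  rw [Finset.mem_union, not_or] at hk
  rw [D_eq_Dsum a hae ha p S hS]
  unfold Dsum
  rw [map_sum]
  apply Finset.sum_eq_zero
  intro v hv
  rw [Derivation.map_smul, pderiv_mul]
  rw [pderiv_X_of_ne (by
    intro h
    exact hk.2 (Finset.mem_image.2 ⟨v, hv, h⟩))]
  rw [pderiv_comm', hS k hk.1]
  simp

lemma D_zero (a : ℕ) (hae : Even a) (ha : N ∣ a) :
    D (c := c) a hae ha 0 = 0 := by
  rw [D_eq_Dsum a hae ha 0 ∅ (by simp)]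
  simp [Dsum]

lemma D_add (a : ℕ) (hae : Even a) (ha : N ∣ a) (p q : MvPolynomial (BGDVar N c) ℚ) :
    D a hae ha (p + q) = D a hae ha p + D a hae ha q := by
  set S := p.vars ∪ q.vars ∪ (p + q).vars with hSdef
  have h1 : ∀ v ∉ S, pderiv v p = 0 := fun v hv =>
    pderiv_vars v (fun h => hv (by simp [hSdef, h]))
  have h2 : ∀ v ∉ S, pderiv v q = 0 := fun v hv =>
    pderiv_vars v (fun h => hv (by simp [hSdef, h]))
  have h3 : ∀ v ∉ S, pderiv v (p + q) = 0 := fun v hv =>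
    pderiv_vars v (fun h => hv (by simp [hSdef, h]))
  rw [D_eq_Dsum a hae ha p S h1, D_eq_Dsum a hae ha q S h2, D_eq_Dsum a hae ha (p+q) S h3]
  unfold Dsum
  rw [← Finset.sum_add_distrib]
  apply Finset.sum_congr rfl
  intro v _
  rw [map_add]
  simp only [smul_eq_C_mul]
  ring

lemma D_smul (a : ℕ) (hae : Even a) (ha : N ∣ a) (r : ℚ) (p : MvPolynomial (BGDVar N c) ℚ) :
    D a hae ha (r • p) = r • D a hae ha p := by
  have h1 : ∀ v ∉ p.vars, pderiv v (r • p) = 0 := by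
    intro v hv
    rw [Derivation.map_smul, pderiv_vars v hv, smul_zero]
  rw [D_eq_Dsum a hae ha p p.vars pderiv_vars, D_eq_Dsum a hae ha (r • p) p.vars h1]
  unfold Dsum
  rw [Finset.smul_sum]
  apply Finset.sum_congr rfl
  intro v _
  rw [Derivation.map_smul]
  simp only [smul_eq_C_mul]
  ring

lemma D_mul (a : ℕ) (hae : Even a) (ha : N ∣ a) (p q : MvPolynomial (BGDVar N c) ℚ) :
    D a hae ha (p * q) = D a hae ha p * q + p * D a hae ha q := by
  set S := p.vars ∪ q.vars ∪ (p * q).vars with hSdef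
  have h1 : ∀ v ∉ S, pderiv v p = 0 := fun v hv =>
    pderiv_vars v (fun h => hv (by simp [hSdef, h]))
  have h2 : ∀ v ∉ S, pderiv v q = 0 := fun v hv =>
    pderiv_vars v (fun h => hv (by simp [hSdef, h]))
  have h3 : ∀ v ∉ S, pderiv v (p * q) = 0 := fun v hv =>
    pderiv_vars v (fun h => hv (by simp [hSdef, h]))
  rw [D_eq_Dsum a hae ha p S h1, D_eq_Dsum a hae ha q S h2, D_eq_Dsum a hae ha (p*q) S h3]
  unfold Dsum
  rw [Finset.sum_mul, Finset.mul_sum, ← Finset.sum_add_distrib]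
  apply Finset.sum_congr rfl
  intro v _
  rw [pderiv_mul]
  simp only [smul_eq_C_mul]
  ring

lemma D_finset_sum {ι : Type*} (a : ℕ) (hae : Even a) (ha : N ∣ a) (s : Finset ι)
    (f : ι → MvPolynomial (BGDVar N c) ℚ) :
    D a hae ha (∑ x ∈ s, f x) = ∑ x ∈ s, D a hae ha (f x) := by
  classical
  induction s using Finset.cons_induction with
  | empty => simp [D_zero]
  | cons x s hx ih => rw [Finset.sum_cons, D_add, ih, Finset.sum_cons]

lemma D_X (a : ℕ) (hae : Even a) (ha : N ∣ a) (v : BGDVar N c) :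
    D a hae ha (X v) = ((v.1.1 + a : ℕ) : ℚ) • X ((shI a hae ha v.1, v.2) : BGDVar N c) := by
  rw [D_eq_Dsum a hae ha (X v) {v} (by
    intro u hu
    exact pderiv_X_of_ne (by simpa using (Finset.notMem_singleton.1 hu).symm))]
  unfold Dsum
  rw [Finset.sum_singleton, pderiv_X_self, mul_one]


def IdxF (N : ℕ) (n : ℕ) : Finset (BGDTimeIndex N) :=
  (Finset.range (n+1)).subtype _

lemma mem_IdxF {n : ℕ} {j : BGDTimeIndex N} : j ∈ IdxF N n ↔ j.1 ≤ n := by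
  simp [IdxF, Finset.mem_subtype, Nat.lt_succ_iff]

noncomputable def Qsum (N c : ℕ) (a : ℕ) (S T : Finset (BGDTimeIndex N)) :
    MvPolynomial (BGDVar N c) ℚ :=
  ∑ i ∈ S, ∑ j ∈ T, ∑ α : Fin c,
    if i.1 + j.1 = a then
      ((i.1 : ℚ) * (j.1 : ℚ)) • (X ((i, α) : BGDVar N c) * X ((j, α) : BGDVar N c))
    else 0

lemma Qp_eq_Qsum (a : ℕ) (S T : Finset (BGDTimeIndex N)) (hS : IdxF N a ⊆ S)
    (hT : IdxF N a ⊆ T) : Qp N c a = Qsum N c a S T := by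
  unfold Qp Qsum
  simp only [finsum_eq_sum_of_fintype]
  have hinner : ∀ i : BGDTimeIndex N,
      (∑ᶠ j : BGDTimeIndex N, ∑ α : Fin c,
        if i.1 + j.1 = a then
          ((i.1 : ℚ) * (j.1 : ℚ)) • (X ((i, α) : BGDVar N c) * X ((j, α) : BGDVar N c))
        else (0 : MvPolynomial (BGDVar N c) ℚ))
      = ∑ j ∈ T, ∑ α : Fin c,
        if i.1 + j.1 = a then
          ((i.1 : ℚ) * (j.1 : ℚ)) • (X ((i, α) : BGDVar N c) * X ((j, α) : BGDVar N c))
        else (0 : MvPolynomial (BGDVar N c) ℚ) := by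
    intro i
    apply finsum_eq_finset_sum_of_support_subset
    intro j hj
    simp only [Function.mem_support, ne_eq] at hj
    by_contra hjm
    apply hj
    apply Finset.sum_eq_zero
    intro α _
    rw [if_neg]
    have : ¬ j.1 ≤ a := fun h => hjm (hT (mem_IdxF.2 h))
    omega
  rw [finsum_congr hinner]
  apply finsum_eq_finset_sum_of_support_subset
  intro i hi
  simp only [Function.mem_support, ne_eq] at hi
  by_contra him
  apply hi
  apply Finset.sum_eq_zero
  intro j _
  apply Finset.sum_eq_zero
  intro α _
  rw [if_neg]
  have hj1 := j.2.1
  have : ¬ i.1 ≤ a := fun h => him (hS (mem_IdxF.2 h))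
  omega


lemma keyDD (a b : ℕ) (hae : Even a) (ha : N ∣ a) (hbe : Even b) (hb : N ∣ b)
    (p : MvPolynomial (BGDVar N c) ℚ) :
    D a hae ha (D b hbe hb p) - D b hbe hb (D a hae ha p)
      = ((b : ℚ) - (a : ℚ)) • D (a+b) (hae.add hbe) (Nat.dvd_add ha hb) p := by
  classical
  set Sp := p.vars with hSp
  set S' := Sp ∪ Sp.image (fun v => ((shI b hbe hb v.1, v.2) : BGDVar N c))
      ∪ Sp.image (fun v => ((shI a hae ha v.1, v.2) : BGDVar N c)) with hS'
  have hp : ∀ v ∉ Sp, pderiv v p = 0 := pderiv_vars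
  have hsub : Sp ⊆ S' := by
    intro v hv
    exact Finset.mem_union_left _ (Finset.mem_union_left _ hv)
  have hDb : ∀ v ∉ S', pderiv v (D b hbe hb p) = 0 := by
    intro v hv
    apply pderiv_D_zero b hbe hb p Sp hp
    intro hmem
    apply hv
    rw [Finset.mem_union] at hmem
    rcases hmem with h | h
    · exact hsub h
    · exact Finset.mem_union_left _ (Finset.mem_union_right _ h)
  have hDa : ∀ v ∉ S', pderiv v (D a hae ha p) = 0 := by
    intro v hv
    apply pderiv_D_zero a hae ha p Sp hp
    intro hmem
    apply hv
    rw [Finset.mem_union] at hmem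
    rcases hmem with h | h
    · exact hsub h
    · exact Finset.mem_union_right _ h
  have hclb : ∀ v ∈ Sp, ((shI b hbe hb v.1, v.2) : BGDVar N c) ∈ S' := by
    intro v hv
    exact Finset.mem_union_left _
      (Finset.mem_union_right _ (Finset.mem_image.2 ⟨v, hv, rfl⟩))
  have hcla : ∀ v ∈ Sp, ((shI a hae ha v.1, v.2) : BGDVar N c) ∈ S' := by
    intro v hv
    exact Finset.mem_union_right _ (Finset.mem_image.2 ⟨v, hv, rfl⟩)
  have expand : ∀ (x : ℕ) (hxe : Even x) (hx : N ∣ x) (y : ℕ) (hye : Even y) (hy : N ∣ y)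
      (hcl : ∀ v ∈ Sp, ((shI y hye hy v.1, v.2) : BGDVar N c) ∈ S')
      (hD : ∀ v ∉ S', pderiv v (D y hye hy p) = 0),
      D x hxe hx (D y hye hy p)
        = (∑ v ∈ Sp, (((v.1.1 + y + x : ℕ) : ℚ) * ((v.1.1 + y : ℕ) : ℚ)) •
            (X ((shI x hxe hx (shI y hye hy v.1), v.2) : BGDVar N c) * pderiv v p))
          + ∑ u ∈ Sp, ∑ v ∈ Sp,
              (((u.1.1 + x : ℕ) : ℚ) * ((v.1.1 + y : ℕ) : ℚ)) •
                (X ((shI x hxe hx u.1, u.2) : BGDVar N c) *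
                  (X ((shI y hye hy v.1, v.2) : BGDVar N c) * pderiv u (pderiv v p))) := by
    intro x hxe hx y hye hy hcl hD
    rw [D_eq_Dsum x hxe hx _ S' hD, D_eq_Dsum y hye hy p Sp hp]
    unfold Dsum
    have step1 : ∀ u : BGDVar N c,
        ((u.1.1 + x : ℕ) : ℚ) • (X ((shI x hxe hx u.1, u.2) : BGDVar N c) *
          pderiv u (∑ v ∈ Sp, ((v.1.1 + y : ℕ) : ℚ) •
            (X ((shI y hye hy v.1, v.2) : BGDVar N c) * pderiv v p)))
        = (∑ v ∈ Sp,
            if ((shI y hye hy v.1, v.2) : BGDVar N c) = u then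
              (((u.1.1 + x : ℕ) : ℚ) * ((v.1.1 + y : ℕ) : ℚ)) •
                (X ((shI x hxe hx u.1, u.2) : BGDVar N c) * pderiv v p)
            else 0)
          + ∑ v ∈ Sp,
              (((u.1.1 + x : ℕ) : ℚ) * ((v.1.1 + y : ℕ) : ℚ)) •
                (X ((shI x hxe hx u.1, u.2) : BGDVar N c) *
                  (X ((shI y hye hy v.1, v.2) : BGDVar N c) * pderiv u (pderiv v p))) := by
      intro u
      rw [map_sum, Finset.mul_sum, Finset.smul_sum, ← Finset.sum_add_distrib]
      apply Finset.sum_congr rfl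
      intro v _
      rw [Derivation.map_smul, pderiv_mul, pderiv_X, Pi.single_apply]
      split_ifs <;> (simp only [smul_eq_C_mul, map_mul]; ring)
    rw [Finset.sum_congr rfl (fun u _ => step1 u), Finset.sum_add_distrib]
    congr 1
    · rw [Finset.sum_comm]
      apply Finset.sum_congr rfl
      intro v hv
      rw [Finset.sum_ite_eq S' ((shI y hye hy v.1, v.2) : BGDVar N c) _,
        if_pos (hcl v hv)]
      rfl
    · refine (Finset.sum_subset hsub ?_).symm
      intro u _ hu
      apply Finset.sum_eq_zero
      intro v _
      rw [pderiv_comm', hp u hu, map_zero, mul_zero, mul_zero, smul_zero]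
  rw [expand a hae ha b hbe hb hclb hDb, expand b hbe hb a hae ha hcla hDa,
    D_eq_Dsum (a+b) (hae.add hbe) (Nat.dvd_add ha hb) p Sp hp]
  have hB : (∑ u ∈ Sp, ∑ v ∈ Sp,
        (((u.1.1 + a : ℕ) : ℚ) * ((v.1.1 + b : ℕ) : ℚ)) •
          (X ((shI a hae ha u.1, u.2) : BGDVar N c) *
            (X ((shI b hbe hb v.1, v.2) : BGDVar N c) * pderiv u (pderiv v p))))
      = ∑ u ∈ Sp, ∑ v ∈ Sp,
          (((u.1.1 + b : ℕ) : ℚ) * ((v.1.1 + a : ℕ) : ℚ)) •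
            (X ((shI b hbe hb u.1, u.2) : BGDVar N c) *
              (X ((shI a hae ha v.1, v.2) : BGDVar N c) * pderiv u (pderiv v p))) := by
    rw [Finset.sum_comm]
    apply Finset.sum_congr rfl
    intro u _
    apply Finset.sum_congr rfl
    intro v _
    rw [pderiv_comm']
    simp only [smul_eq_C_mul, map_mul]
    ring
  rw [hB, add_sub_add_right_eq_sub]
  unfold Dsum
  rw [Finset.smul_sum, ← Finset.sum_sub_distrib]
  apply Finset.sum_congr rfl
  intro v _
  have hc1 : shI a hae ha (shI b hbe hb v.1)
      = shI (a+b) (hae.add hbe) (Nat.dvd_add ha hb) v.1 := Subtype.ext (by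
    simp only [shI]
    omega)
  have hc2 : shI b hbe hb (shI a hae ha v.1)
      = shI (a+b) (hae.add hbe) (Nat.dvd_add ha hb) v.1 := Subtype.ext (by
    simp only [shI]
    omega)
  rw [hc1, hc2, smul_smul, ← sub_smul]
  congr 1
  push_cast
  ring


lemma shI_val (x : ℕ) (hxe : Even x) (hx : N ∣ x) (k : BGDTimeIndex N) :
    (shI x hxe hx k).1 = k.1 + x := rfl

lemma D_Qsum (x : ℕ) (hxe : Even x) (hx : N ∣ x) (y : ℕ)
    (S T : Finset (BGDTimeIndex N)) :
    D (c := c) x hxe hx (Qsum N c y S T)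
      = (∑ i ∈ S, ∑ j ∈ T, ∑ α : Fin c,
          if i.1 + j.1 = y then
            ((i.1 : ℚ) * (j.1 : ℚ) * ((i.1 : ℚ) + x)) •
              (X ((shI x hxe hx i, α) : BGDVar N c) * X ((j, α) : BGDVar N c))
          else 0)
        + ∑ i ∈ S, ∑ j ∈ T, ∑ α : Fin c,
            if i.1 + j.1 = y then
              ((i.1 : ℚ) * (j.1 : ℚ) * ((j.1 : ℚ) + x)) •
                (X ((i, α) : BGDVar N c) * X ((shI x hxe hx j, α) : BGDVar N c))
            else 0 := by
  unfold Qsum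
  rw [D_finset_sum, ← Finset.sum_add_distrib]
  apply Finset.sum_congr rfl
  intro i _
  rw [D_finset_sum, ← Finset.sum_add_distrib]
  apply Finset.sum_congr rfl
  intro j _
  rw [D_finset_sum, ← Finset.sum_add_distrib]
  apply Finset.sum_congr rfl
  intro α _
  rw [apply_ite (D x hxe hx), D_zero]
  split_ifs with h
  · rw [D_smul, D_mul, D_X, D_X]
    simp only [smul_eq_C_mul, map_mul]
    push_cast
    ring
  · simp

lemma reindex1 (x y : ℕ) (hxe : Even x) (hx : N ∣ x) (T : Finset (BGDTimeIndex N))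
    (hT : ∀ k : BGDTimeIndex N, k.1 ≤ x + y → k ∈ T) :
    (∑ i ∈ T, ∑ j ∈ T, ∑ α : Fin c,
        if i.1 + j.1 = y then
          ((i.1 : ℚ) * (j.1 : ℚ) * ((i.1 : ℚ) + x)) •
            (X ((shI x hxe hx i, α) : BGDVar N c) * X ((j, α) : BGDVar N c))
        else (0 : MvPolynomial (BGDVar N c) ℚ))
      = ∑ i ∈ T, ∑ j ∈ T, ∑ α : Fin c,
          if i.1 + j.1 = x + y ∧ x < i.1 then
            (((i.1 : ℚ) - (x : ℚ)) * (j.1 : ℚ) * (i.1 : ℚ)) •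
              (X ((i, α) : BGDVar N c) * X ((j, α) : BGDVar N c))
          else (0 : MvPolynomial (BGDVar N c) ℚ) := by
  classical
  simp only [Finset.sum_ite_irrel, Finset.sum_const_zero]
  rw [← Finset.sum_product', ← Finset.sum_product']
  rw [← Finset.sum_filter, ← Finset.sum_filter]
  refine Finset.sum_bij'
    (fun z _ => ((shI x hxe hx z.1, z.2) : BGDTimeIndex N × BGDTimeIndex N))
    (fun w hw =>
      ((⟨w.1.1 - x, by
          have hm := Finset.mem_filter.1 hw
          have hlt : x < w.1.1 := hm.2.2
          refine ⟨by omega, Nat.Odd.sub_even (le_of_lt hlt) w.1.2.2.1 hxe, ?_⟩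
          intro hd
          apply w.1.2.2.2
          have hc : w.1.1 - x + x = w.1.1 := Nat.sub_add_cancel (le_of_lt hlt)
          exact hc ▸ Nat.dvd_add hd hx⟩ : BGDTimeIndex N), w.2))
    ?_ ?_ ?_ ?_ ?_
  · intro z hz
    simp only [Finset.mem_filter, Finset.mem_product] at hz
    obtain ⟨⟨hz1, hz2⟩, heq⟩ := hz
    have h2 := z.2.2.1
    have h1p := z.1.2.1
    simp only [Finset.mem_filter, Finset.mem_product, shI_val]
    exact ⟨⟨hT _ (by rw [shI_val]; omega), hz2⟩, by omega, by omega⟩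
  · intro w hw
    simp only [Finset.mem_filter, Finset.mem_product] at hw
    obtain ⟨⟨hw1, hw2⟩, heq, hlt⟩ := hw
    simp only [Finset.mem_filter, Finset.mem_product]
    exact ⟨⟨hT _ (by show w.1.1 - x ≤ x + y; omega), hw2⟩, by
      show (w.1.1 - x) + w.2.1 = y
      omega⟩
  · intro z hz
    simp only [Prod.fst, Prod.snd]
    ext
    · simp [shI_val]
    · rfl
  · intro w hw
    simp only [Prod.fst, Prod.snd]
    have hm := Finset.mem_filter.1 hw
    have hlt : x < w.1.1 := hm.2.2
    ext
    · simp only [shI_val]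
      omega
    · rfl
  · intro z hz
    simp only [Prod.fst, Prod.snd]
    apply Finset.sum_congr rfl
    intro α _
    congr 1
    simp only [shI_val]
    push_cast
    ring

lemma reindex2 (x y : ℕ) (hxe : Even x) (hx : N ∣ x) (T : Finset (BGDTimeIndex N))
    (hT : ∀ k : BGDTimeIndex N, k.1 ≤ x + y → k ∈ T) :
    (∑ i ∈ T, ∑ j ∈ T, ∑ α : Fin c,
        if i.1 + j.1 = y then
          ((i.1 : ℚ) * (j.1 : ℚ) * ((j.1 : ℚ) + x)) •
            (X ((i, α) : BGDVar N c) * X ((shI x hxe hx j, α) : BGDVar N c))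
        else (0 : MvPolynomial (BGDVar N c) ℚ))
      = ∑ i ∈ T, ∑ j ∈ T, ∑ α : Fin c,
          if i.1 + j.1 = x + y ∧ x < j.1 then
            ((i.1 : ℚ) * ((j.1 : ℚ) - (x : ℚ)) * (j.1 : ℚ)) •
              (X ((i, α) : BGDVar N c) * X ((j, α) : BGDVar N c))
          else (0 : MvPolynomial (BGDVar N c) ℚ) := by
  classical
  simp only [Finset.sum_ite_irrel, Finset.sum_const_zero]
  rw [← Finset.sum_product', ← Finset.sum_product']
  rw [← Finset.sum_filter, ← Finset.sum_filter]
  refine Finset.sum_bij'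
    (fun z _ => ((z.1, shI x hxe hx z.2) : BGDTimeIndex N × BGDTimeIndex N))
    (fun w hw =>
      (w.1, (⟨w.2.1 - x, by
          have hm := Finset.mem_filter.1 hw
          have hlt : x < w.2.1 := hm.2.2
          refine ⟨by omega, Nat.Odd.sub_even (le_of_lt hlt) w.2.2.2.1 hxe, ?_⟩
          intro hd
          apply w.2.2.2.2
          have hc : w.2.1 - x + x = w.2.1 := Nat.sub_add_cancel (le_of_lt hlt)
          exact hc ▸ Nat.dvd_add hd hx⟩ : BGDTimeIndex N)))
    ?_ ?_ ?_ ?_ ?_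
  · intro z hz
    simp only [Finset.mem_filter, Finset.mem_product] at hz
    obtain ⟨⟨hz1, hz2⟩, heq⟩ := hz
    have h1 := z.1.2.1
    have h2p := z.2.2.1
    simp only [Finset.mem_filter, Finset.mem_product, shI_val]
    exact ⟨⟨hz1, hT _ (by rw [shI_val]; omega)⟩, by omega, by omega⟩
  · intro w hw
    simp only [Finset.mem_filter, Finset.mem_product] at hw
    obtain ⟨⟨hw1, hw2⟩, heq, hlt⟩ := hw
    simp only [Finset.mem_filter, Finset.mem_product]
    exact ⟨⟨hw1, hT _ (by show w.2.1 - x ≤ x + y; omega)⟩, by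
      show w.1.1 + (w.2.1 - x) = y
      omega⟩
  · intro z hz
    simp only [Prod.fst, Prod.snd]
    ext
    · rfl
    · simp [shI_val]
  · intro w hw
    simp only [Prod.fst, Prod.snd]
    have hm := Finset.mem_filter.1 hw
    have hlt : x < w.2.1 := hm.2.2
    ext
    · rfl
    · simp only [shI_val]
      omega
  · intro z hz
    simp only [Prod.fst, Prod.snd]
    apply Finset.sum_congr rfl
    intro α _
    congr 1
    simp only [shI_val]
    push_cast
    ring


lemma keyQ (a b : ℕ) (hae : Even a) (ha : N ∣ a) (hbe : Even b) (hb : N ∣ b) :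
    D (c := c) a hae ha (Qp N c b) - D b hbe hb (Qp N c a)
      = ((b : ℚ) - (a : ℚ)) • Qp N c (a+b) := by
  classical
  set T := IdxF N (a+b) with hTdef
  have hT : ∀ k : BGDTimeIndex N, k.1 ≤ a + b → k ∈ T := fun k hk => mem_IdxF.2 hk
  have hT' : ∀ k : BGDTimeIndex N, k.1 ≤ b + a → k ∈ T := fun k hk =>
    mem_IdxF.2 (by omega)
  have hTb : IdxF N b ⊆ T := fun k hk => mem_IdxF.2 (le_trans (mem_IdxF.1 hk) (by omega))
  have hTa : IdxF N a ⊆ T := fun k hk => mem_IdxF.2 (le_trans (mem_IdxF.1 hk) (by omega))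
  rw [Qp_eq_Qsum b T T hTb hTb, Qp_eq_Qsum a T T hTa hTa,
    Qp_eq_Qsum (a+b) T T subset_rfl subset_rfl]
  rw [D_Qsum a hae ha b T T, D_Qsum b hbe hb a T T]
  rw [reindex1 a b hae ha T hT, reindex2 a b hae ha T hT,
    reindex1 b a hbe hb T hT', reindex2 b a hbe hb T hT']
  unfold Qsum
  simp only [Finset.smul_sum, ← Finset.sum_add_distrib, ← Finset.sum_sub_distrib]
  apply Finset.sum_congr rfl
  intro i _
  apply Finset.sum_congr rfl
  intro j _
  apply Finset.sum_congr rfl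
  intro α _
  have hia : i.1 ≠ a := by
    intro h
    exact (Nat.not_odd_iff_even.2 (h ▸ hae)) i.2.2.1
  have hib : i.1 ≠ b := by
    intro h
    exact (Nat.not_odd_iff_even.2 (h ▸ hbe)) i.2.2.1
  have hja : j.1 ≠ a := by
    intro h
    exact (Nat.not_odd_iff_even.2 (h ▸ hae)) j.2.2.1
  have hjb : j.1 ≠ b := by
    intro h
    exact (Nat.not_odd_iff_even.2 (h ▸ hbe)) j.2.2.1
  have hi1 := i.2.1
  have hj1 := j.2.1
  by_cases hmain : i.1 + j.1 = a + b
  · have hq : (i.1 : ℚ) + (j.1 : ℚ) = (a : ℚ) + (b : ℚ) := by exact_mod_cast hmain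
    rw [if_pos hmain, smul_smul]
    split_ifs <;>
      first
        | (exfalso; omega)
        | (match_scalars <;> linear_combination ((i.1 : ℚ) * (j.1 : ℚ)) * hq)
        | (match_scalars <;> linear_combination (-(i.1 : ℚ) * (j.1 : ℚ)) * hq)
        | (match_scalars <;> ring)
  · rw [if_neg hmain, smul_zero]
    split_ifs <;> first | (exfalso; omega) | simp

end VirB


/-- The operators `W_a` (`a` a positive even multiple of `N`) satisfy the
Virasoro commutation relation `W_a ∘ W_b − W_b ∘ W_a = ((b − a)/2) · W_{a+b}`. -/
theorem virasoro_commutation_BGD (N c : ℕ) (hN : 2 ≤ N) (hc : 1 ≤ c)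
    (a b : ℕ) (hapos : 0 < a) (hae : Even a) (ha : N ∣ a)
    (hbpos : 0 < b) (hbe : Even b) (hb : N ∣ b)
    (p : MvPolynomial (BGDVar N c) ℚ) :
    virasoroOpBGD N c a hae ha (virasoroOpBGD N c b hbe hb p)
        - virasoroOpBGD N c b hbe hb (virasoroOpBGD N c a hae ha p)
      = (((b : ℚ) - (a : ℚ)) / 2) •
          virasoroOpBGD N c (a + b) (hae.add hbe) (Nat.dvd_add ha hb) p := by
  simp only [VirB.W_eq]
  simp only [VirB.D_add, VirB.D_smul, VirB.D_mul]
  have hDD' : VirB.D a hae ha (VirB.D b hbe hb p)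
      = ((b : ℚ) - (a : ℚ)) • VirB.D (a+b) (hae.add hbe) (Nat.dvd_add ha hb) p
        + VirB.D b hbe hb (VirB.D a hae ha p) :=
    eq_add_of_sub_eq (VirB.keyDD a b hae ha hbe hb p)
  have hQQ' : VirB.D (c := c) a hae ha (VirB.Qp N c b)
      = ((b : ℚ) - (a : ℚ)) • VirB.Qp N c (a+b) + VirB.D b hbe hb (VirB.Qp N c a) :=
    eq_add_of_sub_eq (VirB.keyQ a b hae ha hbe hb)
  rw [hDD', hQQ']
  have hcomm : VirB.Qp N c a * (VirB.Qp N c b * p) = VirB.Qp N c b * (VirB.Qp N c a * p) := by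
    ring
  simp only [smul_add, mul_add, add_mul, smul_mul_assoc, mul_smul_comm, smul_smul]
  rw [hcomm]
  match_scalars <;> ring
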